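/- Let n ≥ 1, a ∈ ℝ, σ > 0, and fix c ∈ {−1,1}ⁿ. Let z₁,…,zₙ be i.i.d. Gaussian random variables with mean 0 and variance σ², let yᵢ = a·cᵢ + zᵢ, and define U = exp(−na²/(2σ²)) · (1/2ⁿ) · Σ_{b ∈ {−1,1}ⁿ} exp((a/σ²)·Σ_{i=1}^{n} yᵢbᵢ). Then E[U²] ≤ (cosh(a²/σ²))ⁿ · (cosh(2a²/σ²))ⁿ. -/

import Mathlib

open MeasureTheory ProbabilityTheory Finset Real
open scoped NNReal ENNReal

lemma my_gauss_mgf (v : ℝ≥0) (hv : v ≠ 0) (t : ℝ) :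
    Integrable (fun x => Real.exp (t * x)) (gaussianReal 0 v) ∧
      ∫ x, Real.exp (t * x) ∂(gaussianReal 0 v) = Real.exp ((v : ℝ) * t ^ 2 / 2) := by
  have hv' : (0:ℝ) < (v:ℝ) := by exact_mod_cast zero_lt_iff.mpr hv
  have key : ∀ x : ℝ, gaussianPDFReal 0 v x * Real.exp (t * x)
      = Real.exp ((v:ℝ) * t ^ 2 / 2) * gaussianPDFReal ((v:ℝ) * t) v x := by
    intro x
    have hexp : -x^2/(2*(v:ℝ)) + t*x = (v:ℝ)*t^2/2 + -(x - (v:ℝ)*t)^2/(2*(v:ℝ)) := by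
      field_simp; ring
    calc gaussianPDFReal 0 v x * Real.exp (t*x)
        = (√(2*π*(v:ℝ)))⁻¹ * Real.exp (-x^2/(2*(v:ℝ)) + t*x) := by
          simp only [gaussianPDFReal, sub_zero]; rw [mul_assoc, ← Real.exp_add]
      _ = (√(2*π*(v:ℝ)))⁻¹ * (Real.exp ((v:ℝ)*t^2/2) * Real.exp (-(x - (v:ℝ)*t)^2/(2*(v:ℝ)))) := by
          rw [hexp, Real.exp_add]
      _ = Real.exp ((v:ℝ)*t^2/2) * gaussianPDFReal ((v:ℝ)*t) v x := by
          simp only [gaussianPDFReal]; ring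
  rw [gaussianReal_of_var_ne_zero _ hv]
  have hpdf_eq : gaussianPDF 0 v
      = fun x => ((Real.toNNReal (gaussianPDFReal 0 v x) : ℝ≥0) : ℝ≥0∞) := rfl
  set f : ℝ → ℝ≥0 := fun x => Real.toNNReal (gaussianPDFReal 0 v x) with hf
  have hfm : Measurable f := (measurable_gaussianPDFReal 0 v).real_toNNReal
  have hsmul : ∀ x, f x • Real.exp (t * x)
      = Real.exp ((v:ℝ) * t ^ 2 / 2) * gaussianPDFReal ((v:ℝ) * t) v x := by
    intro x
    rw [NNReal.smul_def, smul_eq_mul, hf]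
    rw [Real.coe_toNNReal _ (gaussianPDFReal_nonneg _ _ _)]
    exact key x
  constructor
  · rw [hpdf_eq, integrable_withDensity_iff_integrable_smul hfm]
    have : (fun x => f x • Real.exp (t * x))
        = fun x => Real.exp ((v:ℝ) * t ^ 2 / 2) * gaussianPDFReal ((v:ℝ) * t) v x :=
      funext hsmul
    rw [this]
    exact (integrable_gaussianPDFReal _ _).const_mul _
  · rw [hpdf_eq, integral_withDensity_eq_integral_smul hfm]
    simp_rw [hsmul]
    rw [MeasureTheory.integral_const_mul, integral_gaussianPDFReal_eq_one _ hv, mul_one]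

lemma my_exp_int {Ω : Type} [MeasurableSpace Ω] (μ : Measure Ω) {σ : ℝ} (hσ : 0 < σ)
    {Z : Ω → ℝ} (hm : Measurable Z)
    (hZ : μ.map Z = gaussianReal 0 ⟨σ ^ 2, sq_nonneg σ⟩) (s : ℝ) :
    Integrable (fun ω => Real.exp (s * Z ω)) μ ∧
      ∫ ω, Real.exp (s * Z ω) ∂μ = Real.exp (σ ^ 2 * s ^ 2 / 2) := by
  have hv : (⟨σ ^ 2, sq_nonneg σ⟩ : ℝ≥0) ≠ 0 := by
    refine NNReal.coe_ne_zero.mp ?_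
    show (σ:ℝ) ^ 2 ≠ 0
    positivity
  obtain ⟨hint, hval⟩ := my_gauss_mgf ⟨σ ^ 2, sq_nonneg σ⟩ hv s
  rw [← hZ] at hint hval
  have hg : AEStronglyMeasurable (fun x => Real.exp (s * x)) (μ.map Z) :=
    ((measurable_id.const_mul s).exp).aestronglyMeasurable
  constructor
  · exact (integrable_map_measure hg hm.aemeasurable).mp hint
  · rw [integral_map hm.aemeasurable hg] at hval
    exact hval

lemma my_sum_int {Ω : Type} [MeasurableSpace Ω] (μ : Measure Ω) [IsProbabilityMeasure μ]
    (n : ℕ) {σ : ℝ} (hσ : 0 < σ) (z : Fin n → Ω → ℝ) (hzm : ∀ i, Measurable (z i))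
    (hz : ∀ i, μ.map (z i) = gaussianReal 0 ⟨σ ^ 2, sq_nonneg σ⟩)
    (hindep : iIndepFun z μ) (s : Fin n → ℝ) :
    Integrable (fun ω => Real.exp (∑ i, s i * z i ω)) μ ∧
      ∫ ω, Real.exp (∑ i, s i * z i ω) ∂μ = Real.exp (∑ i, σ ^ 2 * (s i) ^ 2 / 2) := by
  set X : Fin n → Ω → ℝ := fun i ω => s i * z i ω with hX
  have hXind : iIndepFun X μ :=
    hindep.comp (fun i x => s i * x) (fun i => measurable_id.const_mul (s i))
  have hXmeas : ∀ i, Measurable (X i) := fun i => (hzm i).const_mul (s i)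
  have hint1 : ∀ i ∈ Finset.univ, Integrable (fun ω => Real.exp (1 * X i ω)) μ := by
    intro i _
    simp_rw [one_mul, hX]
    exact (my_exp_int μ hσ (hzm i) (hz i) (s i)).1
  have hfun : (fun ω => Real.exp (1 * (∑ i ∈ Finset.univ, X i) ω))
      = fun ω => Real.exp (∑ i, s i * z i ω) := by
    funext ω; simp [Finset.sum_apply, hX]
  constructor
  · have := hXind.integrable_exp_mul_sum hXmeas hint1
    rwa [hfun] at this
  · have hmgf := hXind.mgf_sum hXmeas Finset.univ (t := 1)
    simp only [mgf] at hmgf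
    rw [hfun] at hmgf
    rw [hmgf]
    have hfac : ∀ i ∈ Finset.univ, (∫ ω, Real.exp (1 * X i ω) ∂μ)
        = Real.exp (σ ^ 2 * (s i) ^ 2 / 2) := by
      intro i _
      simp only [one_mul, hX]
      exact (my_exp_int μ hσ (hzm i) (hz i) (s i)).2
    rw [Finset.prod_congr rfl hfac, ← Real.exp_sum]

lemma my_row (n : ℕ) (w : Fin n → ℝ) :
    ∑ d ∈ Fintype.piFinset (fun _ : Fin n => ({-1, 1} : Finset ℝ)),
      Real.exp (∑ i, w i * d i) = ∏ i, (2 * Real.cosh (w i)) := by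
  simp_rw [Real.exp_sum]
  rw [show (∑ d ∈ Fintype.piFinset (fun _ : Fin n => ({-1, 1} : Finset ℝ)),
        ∏ i, Real.exp (w i * d i))
      = ∏ i, ∑ x ∈ ({-1, 1} : Finset ℝ), Real.exp (w i * x) from
    (Finset.prod_univ_sum (fun _ : Fin n => ({-1, 1} : Finset ℝ))
      (fun i x => Real.exp (w i * x))).symm]
  apply Finset.prod_congr rfl
  intro i _
  rw [Finset.sum_pair (by norm_num : (-1 : ℝ) ≠ 1), mul_neg_one, mul_one, Real.cosh_eq]
  ring

lemma my_comb (n : ℕ) (α : ℝ) (c : Fin n → ℝ) (hc : ∀ i, c i = -1 ∨ c i = 1) :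
    ∑ b ∈ Fintype.piFinset (fun _ : Fin n => ({-1, 1} : Finset ℝ)),
      ∑ d ∈ Fintype.piFinset (fun _ : Fin n => ({-1, 1} : Finset ℝ)),
        Real.exp (α * ∑ i, (c i * b i + (c i + b i) * d i))
      ≤ (2 * Real.cosh α) ^ n * (2 * Real.cosh (2 * α)) ^ n := by
  set P := Fintype.piFinset (fun _ : Fin n => ({-1, 1} : Finset ℝ)) with hP
  have hrow : ∀ b ∈ P, ∑ d ∈ P, Real.exp (α * ∑ i, (c i * b i + (c i + b i) * d i))
      = Real.exp (α * ∑ i, c i * b i) * ∏ i, (2 * Real.cosh (α * (c i + b i))) := by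
    intro b _
    have h1 : ∀ d ∈ P, Real.exp (α * ∑ i, (c i * b i + (c i + b i) * d i))
        = Real.exp (α * ∑ i, c i * b i) * Real.exp (∑ i, (α * (c i + b i)) * d i) := by
      intro d _
      rw [← Real.exp_add]
      congr 1
      simp_rw [Finset.mul_sum, ← Finset.sum_add_distrib]
      exact Finset.sum_congr rfl (fun i _ => by ring)
    rw [Finset.sum_congr rfl h1, ← Finset.mul_sum, my_row]
  calc ∑ b ∈ P, ∑ d ∈ P, Real.exp (α * ∑ i, (c i * b i + (c i + b i) * d i))
      = ∑ b ∈ P, Real.exp (α * ∑ i, c i * b i) * ∏ i, (2 * Real.cosh (α * (c i + b i))) :=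
        Finset.sum_congr rfl hrow
    _ ≤ ∑ b ∈ P, Real.exp (α * ∑ i, c i * b i) * (2 * Real.cosh (2 * α)) ^ n := by
        apply Finset.sum_le_sum
        intro b hb
        apply mul_le_mul_of_nonneg_left _ (Real.exp_nonneg _)
        calc ∏ i, (2 * Real.cosh (α * (c i + b i))) ≤ ∏ _i : Fin n, (2 * Real.cosh (2 * α)) := by
              apply Finset.prod_le_prod
              · intro i _; positivity
              · intro i _
                have hbi : b i = -1 ∨ b i = 1 := by
                  have := Fintype.mem_piFinset.mp hb i
                  rcases Finset.mem_insert.mp this with h | h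
                  · exact Or.inl h
                  · exact Or.inr (Finset.mem_singleton.mp h)
                have hcosh : Real.cosh (α * (c i + b i)) ≤ Real.cosh (2 * α) := by
                  rcases hc i with h1 | h1 <;> rcases hbi with h2 | h2 <;> rw [h1, h2]
                  · rw [show α * (-1 + -1 : ℝ) = -(2 * α) by ring, Real.cosh_neg]
                  · rw [show α * (-1 + 1 : ℝ) = 0 by ring, Real.cosh_zero]
                    exact Real.one_le_cosh _
                  · rw [show α * (1 + -1 : ℝ) = 0 by ring, Real.cosh_zero]
                    exact Real.one_le_cosh _
                  · rw [show α * (1 + 1 : ℝ) = 2 * α by ring]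
                linarith
          _ = (2 * Real.cosh (2 * α)) ^ n := by
              rw [Finset.prod_const, Finset.card_univ, Fintype.card_fin]
    _ = (2 * Real.cosh α) ^ n * (2 * Real.cosh (2 * α)) ^ n := by
        rw [← Finset.sum_mul]
        congr 1
        have h2 : ∀ b ∈ P, Real.exp (α * ∑ i, c i * b i)
            = Real.exp (∑ i, (α * c i) * b i) := by
          intro b _
          congr 1
          rw [Finset.mul_sum]
          exact Finset.sum_congr rfl (fun i _ => by ring)
        rw [Finset.sum_congr rfl h2, my_row]
        have h3 : ∀ i ∈ Finset.univ, (2 * Real.cosh (α * c i)) = 2 * Real.cosh α := by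
          intro i _
          rcases hc i with h | h <;> rw [h]
          · rw [mul_neg_one, Real.cosh_neg]
          · rw [mul_one]
        rw [Finset.prod_congr rfl h3, Finset.prod_const, Finset.card_univ, Fintype.card_fin]

/-- For a fixed `c ∈ {-1,1}ⁿ`, `z₁,…,zₙ` i.i.d. Gaussian with mean `0` and variance `σ²`,
`yᵢ = a cᵢ + zᵢ`, and
`U = exp (-n a²/(2σ²)) (1/2ⁿ) Σ_{b ∈ {-1,1}ⁿ} exp ((a/σ²) Σᵢ yᵢ bᵢ)`,
one has `E[U²] ≤ cosh (a²/σ²) ^ n * cosh (2a²/σ²) ^ n`. -/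
theorem stmt_15
    {Ω : Type} [MeasurableSpace Ω] (μ : Measure Ω) [IsProbabilityMeasure μ]
    (n : ℕ) (hn : 1 ≤ n) (a σ : ℝ) (hσ : 0 < σ)
    (c : Fin n → ℝ) (hc : ∀ i, c i = -1 ∨ c i = 1)
    (z : Fin n → Ω → ℝ) (hzm : ∀ i, Measurable (z i))
    (hz : ∀ i, μ.map (z i) = gaussianReal 0 ⟨σ ^ 2, sq_nonneg σ⟩)
    (hindep : iIndepFun z μ) :
    (∫ ω, (Real.exp (-(n * a ^ 2) / (2 * σ ^ 2)) * ((1 / 2 ^ n) *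
        ∑ b ∈ Fintype.piFinset (fun _ : Fin n => ({-1, 1} : Finset ℝ)),
          Real.exp ((a / σ ^ 2) * ∑ i, (a * c i + z i ω) * b i))) ^ 2 ∂μ)
      ≤ Real.cosh (a ^ 2 / σ ^ 2) ^ n * Real.cosh (2 * a ^ 2 / σ ^ 2) ^ n := by
  have hσ2 : (0:ℝ) < σ ^ 2 := by positivity
  set P := Fintype.piFinset (fun _ : Fin n => ({-1, 1} : Finset ℝ)) with hP
  set t : ℝ := a / σ ^ 2 with ht
  set α : ℝ := a ^ 2 / σ ^ 2 with hα
  set E : ℝ := Real.exp (-(n * a ^ 2) / (2 * σ ^ 2)) with hE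
  -- pointwise product of two exponentials
  have hFF : ∀ (ω : Ω) (b d : Fin n → ℝ),
      Real.exp (t * ∑ i, (a * c i + z i ω) * b i) * Real.exp (t * ∑ i, (a * c i + z i ω) * d i)
      = Real.exp (α * ∑ i, c i * (b i + d i)) * Real.exp (∑ i, (t * (b i + d i)) * z i ω) := by
    intro ω b d
    rw [← Real.exp_add, ← Real.exp_add]
    congr 1
    simp_rw [ht, hα, Finset.mul_sum, ← Finset.sum_add_distrib]
    refine Finset.sum_congr rfl fun i _ => ?_
    field_simp
  have hpt : ∀ ω : Ω, (E * ((1 / 2 ^ n : ℝ) *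
        ∑ b ∈ P, Real.exp (t * ∑ i, (a * c i + z i ω) * b i))) ^ 2
      = ∑ b ∈ P, ∑ d ∈ P, (E ^ 2 * (1 / 2 ^ n : ℝ) ^ 2 *
          Real.exp (α * ∑ i, c i * (b i + d i))) *
            Real.exp (∑ i, (t * (b i + d i)) * z i ω) := by
    intro ω
    have hS : (∑ b ∈ P, Real.exp (t * ∑ i, (a * c i + z i ω) * b i)) ^ 2
        = ∑ b ∈ P, ∑ d ∈ P, Real.exp (t * ∑ i, (a * c i + z i ω) * b i) *
            Real.exp (t * ∑ i, (a * c i + z i ω) * d i) := by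
      rw [pow_two, Finset.sum_mul_sum]
    rw [mul_pow, mul_pow, hS, Finset.mul_sum, Finset.mul_sum]
    refine Finset.sum_congr rfl fun b _ => ?_
    rw [Finset.mul_sum, Finset.mul_sum]
    refine Finset.sum_congr rfl fun d _ => ?_
    rw [hFF ω b d]
    ring
  have hint : ∀ s : Fin n → ℝ, Integrable (fun ω => Real.exp (∑ i, s i * z i ω)) μ :=
    fun s => (my_sum_int μ n hσ z hzm hz hindep s).1
  have hval : ∀ s : Fin n → ℝ, ∫ ω, Real.exp (∑ i, s i * z i ω) ∂μ
      = Real.exp (∑ i, σ ^ 2 * (s i) ^ 2 / 2) :=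
    fun s => (my_sum_int μ n hσ z hzm hz hindep s).2
  -- compute the integral
  have hIeq : (∫ ω, (E * ((1 / 2 ^ n : ℝ) *
        ∑ b ∈ P, Real.exp (t * ∑ i, (a * c i + z i ω) * b i))) ^ 2 ∂μ)
      = ∑ b ∈ P, ∑ d ∈ P, (E ^ 2 * (1 / 2 ^ n : ℝ) ^ 2 *
          Real.exp (α * ∑ i, c i * (b i + d i))) *
            Real.exp (∑ i, σ ^ 2 * (t * (b i + d i)) ^ 2 / 2) := by
    rw [integral_congr_ae (ae_of_all μ hpt)]
    rw [integral_finset_sum P (fun b _ => integrable_finset_sum P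
      (fun d _ => ((hint (fun i => t * (b i + d i))).const_mul _)))]
    refine Finset.sum_congr rfl fun b _ => ?_
    rw [integral_finset_sum P (fun d _ => ((hint (fun i => t * (b i + d i))).const_mul _))]
    refine Finset.sum_congr rfl fun d _ => ?_
    rw [MeasureTheory.integral_const_mul, hval (fun i => t * (b i + d i))]
  -- simplify each term
  have hterm : ∀ b ∈ P, ∀ d ∈ P,
      (E ^ 2 * (1 / 2 ^ n : ℝ) ^ 2 * Real.exp (α * ∑ i, c i * (b i + d i))) *
          Real.exp (∑ i, σ ^ 2 * (t * (b i + d i)) ^ 2 / 2)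
      = (1 / 2 ^ n : ℝ) ^ 2 * Real.exp (α * ∑ i, (c i * b i + (c i + b i) * d i)) := by
    intro b hb d hd
    have hbi : ∀ i, b i = -1 ∨ b i = 1 := by
      intro i
      have := Fintype.mem_piFinset.mp hb i
      rcases Finset.mem_insert.mp this with h | h
      · exact Or.inl h
      · exact Or.inr (Finset.mem_singleton.mp h)
    have hdi : ∀ i, d i = -1 ∨ d i = 1 := by
      intro i
      have := Fintype.mem_piFinset.mp hd i
      rcases Finset.mem_insert.mp this with h | h
      · exact Or.inl h
      · exact Or.inr (Finset.mem_singleton.mp h)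
    have hexp2 : ∀ i ∈ Finset.univ, σ ^ 2 * (t * (b i + d i)) ^ 2 / 2 = α * (1 + b i * d i) := by
      intro i _
      rcases hbi i with h1 | h1 <;> rcases hdi i with h2 | h2 <;> rw [h1, h2, ht, hα] <;>
        field_simp <;> ring
    rw [Finset.sum_congr rfl hexp2]
    have hE2 : E ^ 2 = Real.exp (-(n * a ^ 2) / σ ^ 2) := by
      rw [hE, pow_two, ← Real.exp_add]
      congr 1
      field_simp
      ring
    rw [hE2, mul_comm (Real.exp (-(n * a ^ 2) / σ ^ 2)) ((1 / 2 ^ n : ℝ) ^ 2),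
      mul_assoc, mul_assoc, ← Real.exp_add, ← Real.exp_add]
    congr 1
    congr 1
    have hsum1 : ∑ i : Fin n, α * (1 + b i * d i) = n * α + ∑ i : Fin n, α * (b i * d i) := by
      simp_rw [mul_add, mul_one]
      rw [Finset.sum_add_distrib, Finset.sum_const, Finset.card_univ, Fintype.card_fin,
        nsmul_eq_mul]
    rw [hsum1]
    have hsum2 : α * (∑ i, c i * (b i + d i)) + ∑ i : Fin n, α * (b i * d i)
        = α * ∑ i, (c i * b i + (c i + b i) * d i) := by
      rw [Finset.mul_sum, Finset.mul_sum, ← Finset.sum_add_distrib]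
      exact Finset.sum_congr rfl fun i _ => by ring
    have hcancel : -(n * a ^ 2) / σ ^ 2 + (n : ℝ) * α = 0 := by
      rw [hα]; field_simp; ring
    calc -(n * a ^ 2) / σ ^ 2 + (α * ∑ i, c i * (b i + d i) +
          ((n : ℝ) * α + ∑ i : Fin n, α * (b i * d i)))
        = (-(n * a ^ 2) / σ ^ 2 + (n : ℝ) * α) +
            (α * (∑ i, c i * (b i + d i)) + ∑ i : Fin n, α * (b i * d i)) := by ring
      _ = α * ∑ i, (c i * b i + (c i + b i) * d i) := by
          rw [hcancel, hsum2, zero_add]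
  rw [hIeq, Finset.sum_congr rfl (fun b hb => Finset.sum_congr rfl (hterm b hb))]
  simp_rw [← Finset.mul_sum]
  have hbound := my_comb n α c hc
  have h2n : ((1 / 2 ^ n : ℝ)) ^ 2 * ((2 * Real.cosh α) ^ n * (2 * Real.cosh (2 * α)) ^ n)
      = Real.cosh α ^ n * Real.cosh (2 * α) ^ n := by
    rw [mul_pow, mul_pow]
    have h2 : (2:ℝ) ^ n ≠ 0 := by positivity
    field_simp
  have hfin : Real.cosh α ^ n * Real.cosh (2 * α) ^ n
      = Real.cosh (a ^ 2 / σ ^ 2) ^ n * Real.cosh (2 * a ^ 2 / σ ^ 2) ^ n := by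
    rw [hα, show 2 * (a ^ 2 / σ ^ 2) = 2 * a ^ 2 / σ ^ 2 by ring]
  calc (1 / 2 ^ n : ℝ) ^ 2 * ∑ b ∈ P, ∑ d ∈ P,
        Real.exp (α * ∑ i, (c i * b i + (c i + b i) * d i))
      ≤ (1 / 2 ^ n : ℝ) ^ 2 * ((2 * Real.cosh α) ^ n * (2 * Real.cosh (2 * α)) ^ n) := by
        apply mul_le_mul_of_nonneg_left hbound (by positivity)
    _ = Real.cosh (a ^ 2 / σ ^ 2) ^ n * Real.cosh (2 * a ^ 2 / σ ^ 2) ^ n := by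
        rw [h2n, hfin]
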